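/- Let G be a connected graph coloured with two colours, where a move consists of choosing a vertex v and contracting all edges incident with the monochromatic component of v (i.e. flipping its colour, merging it with all neighbouring components). Then there exists an optimal (minimum-length) sequence of moves reducing G to a single monochromatic vertex in which every move is played at the same vertex. -/

import Mathlib

namespace Flood

variable {V C : Type*}

/-- Two vertices are joined by an edge inside a monochromatic class. -/
def monoAdj (G : SimpleGraph V) (ω : V → C) (a b : V) : Prop :=
  G.Adj a b ∧ ω a = ω b

/-- `u` and `v` lie in a common monochromatic component of the colouring `ω`. -/
def monoLinked (G : SimpleGraph V) (ω : V → C) (u v : V) : Prop :=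
  Relation.ReflTransGen (monoAdj G ω) u v

/-- One flooding move: recolour the monochromatic component of `v` with colour `d`. -/
noncomputable def floodMove (G : SimpleGraph V) (ω : V → C) (v : V) (d : C) : V → C :=
  fun u => @ite _ (monoLinked G ω v u) (Classical.propDecidable _) d (ω u)

/-- Apply a sequence of flooding moves. -/
noncomputable def floodSeq (G : SimpleGraph V) (ω : V → C) (S : List (V × C)) : V → C :=
  S.foldl (fun ω' m => floodMove G ω' m.1 m.2) ω

/-- The sequence `S` floods `G`, i.e. makes it monochromatic. -/
def Floods (G : SimpleGraph V) (ω : V → C) (S : List (V × C)) : Prop :=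
  ∀ a b, floodSeq G ω S a = floodSeq G ω S b

/-- Minimum number of moves needed to make `G` monochromatic. -/
noncomputable def floodCost (G : SimpleGraph V) (ω : V → C) : ℕ :=
  sInf {k | ∃ S, S.length = k ∧ Floods G ω S}

/-- Minimum number of moves needed to make `G` monochromatic in colour `d`. -/
noncomputable def floodCostIn (G : SimpleGraph V) (ω : V → C) (d : C) : ℕ :=
  sInf {k | ∃ S, S.length = k ∧ ∀ a, floodSeq G ω S a = d}

/-- The sequence `S` links `u` and `v`. -/
def Links (G : SimpleGraph V) (ω : V → C) (S : List (V × C)) (u v : V) : Prop :=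
  monoLinked G (floodSeq G ω S) u v

/-- Minimum number of moves needed to link `u` and `v`. -/
noncomputable def linkCost (G : SimpleGraph V) (ω : V → C) (u v : V) : ℕ :=
  sInf {k | ∃ S, S.length = k ∧ Links G ω S u v}

/-- Minimum number of moves needed to link `u` and `v` in a monochromatic
component of colour `d`. -/
noncomputable def linkCostIn (G : SimpleGraph V) (ω : V → C) (u v : V) (d : C) : ℕ :=
  sInf {k | ∃ S, S.length = k ∧ Links G ω S u v ∧ floodSeq G ω S u = d}


/-- In the two-colour game a move at a vertex flips the colour of its
monochromatic component (thereby merging it with all neighbouring components). -/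
noncomputable def flipSeq (G : SimpleGraph V) (ω : V → Bool) (S : List V) : V → Bool :=
  S.foldl (fun ω' x => floodMove G ω' x (!ω' x)) ω

end Flood

namespace FloodAux
open Flood
variable {V : Type*} {G : SimpleGraph V}
section Basic
variable {σ : V → Bool}
lemma mL_refl (u : V) : monoLinked G σ u u := Relation.ReflTransGen.refl
lemma mL_symm {a b : V} (h : monoLinked G σ a b) : monoLinked G σ b a :=
  (@Relation.ReflTransGen.stdSymm _ _ ⟨fun _ _ hx => ⟨hx.1.symm, hx.2.symm⟩⟩).symm _ _ h
lemma mL_colour {a b : V} (h : monoLinked G σ a b) : σ a = σ b := by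
  induction h with
  | refl => rfl
  | tail _ h2 ih => exact ih.trans h2.2
lemma mL_tail {a b c : V} (h : monoLinked G σ a b) (hadj : G.Adj b c) (hc : σ b = σ c) :
    monoLinked G σ a c := h.tail ⟨hadj, hc⟩
lemma floodMove_pos {y : V} {d : Bool} {u : V} (h : monoLinked G σ y u) :
    floodMove G σ y d u = d := by unfold floodMove; exact if_pos h
lemma floodMove_neg {y : V} {d : Bool} {u : V} (h : ¬ monoLinked G σ y u) :
    floodMove G σ y d u = σ u := by unfold floodMove; exact if_neg h
lemma monoAdj_floodMove {y : V} {d : Bool} {b c : V} (h : monoAdj G σ b c) :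
    monoAdj G (floodMove G σ y d) b c := by
  refine ⟨h.1, ?_⟩
  by_cases hb : monoLinked G σ y b
  · have hc : monoLinked G σ y c := hb.tail h
    rw [floodMove_pos hb, floodMove_pos hc]
  · have hc : ¬ monoLinked G σ y c := fun hc => hb (mL_tail hc h.1.symm h.2.symm)
    rw [floodMove_neg hb, floodMove_neg hc]
    exact h.2
lemma mL_floodMove {y : V} {d : Bool} {a b : V} (h : monoLinked G σ a b) :
    monoLinked G (floodMove G σ y d) a b := by
  induction h with
  | refl => exact Relation.ReflTransGen.refl
  | tail _ h2 ih => exact ih.tail (monoAdj_floodMove h2)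
lemma bool_ne {a b : Bool} (h : a ≠ b) : a = !b := by
  cases a <;> cases b <;> simp_all
end Basic
def flipN (c : Bool) : ℕ → Bool
  | 0 => c
  | s+1 => !(flipN c s)
lemma flipN_not (c : Bool) : ∀ s, flipN (!c) s = !(flipN c s)
  | 0 => rfl
  | s+1 => by simp only [flipN, flipN_not c s]
def CD (G : SimpleGraph V) (σ : V → Bool) : ℕ → V → V → Prop
  | 0, u, v => monoLinked G σ u v
  | s+1, u, v => CD G σ s u v ∨ ∃ p q, CD G σ s u p ∧ G.Adj p q ∧ monoLinked G σ q v
section CDLemmas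
variable {σ : V → Bool}
lemma CD_zero {u v : V} (h : monoLinked G σ u v) : CD G σ 0 u v := h
lemma CD_succ_of {s : ℕ} {u v : V} (h : CD G σ s u v) : CD G σ (s+1) u v := Or.inl h
lemma CD_refl (s : ℕ) (u : V) : CD G σ s u u := by
  induction s with
  | zero => exact mL_refl u
  | succ s ih => exact Or.inl ih
lemma CD_mono {s s' : ℕ} (hs : s ≤ s') {u v : V} (h : CD G σ s u v) : CD G σ s' u v := by
  induction hs with
  | refl => exact h
  | step _ ih => exact Or.inl ih
lemma CD_step {s : ℕ} {u p q v : V} (h : CD G σ s u p) (hadj : G.Adj p q)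
    (hq : monoLinked G σ q v) : CD G σ (s+1) u v := Or.inr ⟨p, q, h, hadj, hq⟩
lemma CD_closure : ∀ {s : ℕ} {u v v' : V}, CD G σ s u v → monoLinked G σ v v' → CD G σ s u v'
  | 0, _, _, _, h, h2 => h.trans h2
  | _+1, _, _, _, Or.inl h, h2 => Or.inl (CD_closure h h2)
  | _+1, _, _, _, Or.inr ⟨p, q, hp, ha, hq⟩, h2 => Or.inr ⟨p, q, hp, ha, hq.trans h2⟩
lemma CD_front : ∀ {s : ℕ} {u u' v : V}, monoLinked G σ u' u → CD G σ s u v → CD G σ s u' v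
  | 0, _, _, _, h, h2 => h.trans h2
  | _+1, _, _, _, h, Or.inl h2 => Or.inl (CD_front h h2)
  | _+1, _, _, _, h, Or.inr ⟨p, q, hp, ha, hq⟩ => Or.inr ⟨p, q, CD_front h hp, ha, hq⟩
lemma CD_append : ∀ {b a : ℕ} {u v z : V}, CD G σ a u v → CD G σ b v z → CD G σ (a+b) u z
  | 0, _, _, _, _, h, h2 => CD_closure h h2
  | _+1, _, _, _, _, h, Or.inl h2 => Or.inl (CD_append h h2)
  | _+1, _, _, _, _, h, Or.inr ⟨p, q, hp, ha, hq⟩ => Or.inr ⟨p, q, CD_append h hp, ha, hq⟩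
lemma CD_stepfront : ∀ {s : ℕ} {u p q v : V}, monoLinked G σ u p → G.Adj p q →
    CD G σ s q v → CD G σ (s+1) u v
  | 0, _, _, _, _, h, ha, h2 => CD_step (CD_zero h) ha h2
  | _+1, _, _, _, _, h, ha, Or.inl h2 => Or.inl (CD_stepfront h ha h2)
  | _+1, _, _, _, _, h, ha, Or.inr ⟨p', q', hp', ha', hq'⟩ =>
      Or.inr ⟨p', q', CD_stepfront h ha hp', ha', hq'⟩
lemma CD_symm : ∀ {s : ℕ} {u v : V}, CD G σ s u v → CD G σ s v u
  | 0, _, _, h => mL_symm h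
  | _+1, _, _, Or.inl h => Or.inl (CD_symm h)
  | _+1, _, _, Or.inr ⟨p, q, hp, ha, hq⟩ => CD_stepfront (mL_symm hq) ha.symm (CD_symm hp)
lemma CD_frontsplit : ∀ {s : ℕ} {u v : V}, CD G σ (s+1) u v →
    CD G σ s u v ∨ ∃ p q, monoLinked G σ u p ∧ G.Adj p q ∧ CD G σ s q v
  | 0, _, _, Or.inl h => Or.inl h
  | 0, _, _, Or.inr ⟨p, q, hp, ha, hq⟩ => Or.inr ⟨p, q, hp, ha, CD_zero hq⟩
  | s+1, _, _, Or.inl h => by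
      rcases CD_frontsplit h with h' | ⟨p, q, h1, h2, h3⟩
      · exact Or.inl (CD_succ_of h')
      · exact Or.inr ⟨p, q, h1, h2, CD_succ_of h3⟩
  | s+1, _, _, Or.inr ⟨P, Q, hP, hA, hQ⟩ => by
      rcases CD_frontsplit hP with h' | ⟨p, q, h1, h2, h3⟩
      · exact Or.inl (CD_step h' hA hQ)
      · exact Or.inr ⟨p, q, h1, h2, CD_step h3 hA hQ⟩
end CDLemmas

/-! ### Structure theorem for single-vertex play -/
section ST
variable {σ : V → Bool}

lemma flipSeq_append (σ : V → Bool) (S T : List V) :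
    flipSeq G σ (S ++ T) = flipSeq G (flipSeq G σ S) T := by
  unfold flipSeq; rw [List.foldl_append]

lemma play_succ (σ : V → Bool) (s : ℕ) (w : V) :
    flipSeq G σ (List.replicate (s+1) w)
      = floodMove G (flipSeq G σ (List.replicate s w)) w
          (!(flipSeq G σ (List.replicate s w) w)) := by
  rw [List.replicate_succ', flipSeq_append]; rfl

theorem ST (σ : V → Bool) (w : V) : ∀ s : ℕ,
    (∀ u, CD G σ s w u → flipSeq G σ (List.replicate s w) u = flipN (σ w) s)
    ∧ (∀ u, ¬ CD G σ s w u → flipSeq G σ (List.replicate s w) u = σ u)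
    ∧ (∀ u, monoLinked G (flipSeq G σ (List.replicate s w)) w u ↔ CD G σ s w u) := by
  intro s
  induction s with
  | zero =>
    refine ⟨fun u h => ?_, fun u _ => rfl, fun u => Iff.rfl⟩
    exact (mL_colour (h : monoLinked G σ w u)).symm
  | succ s ih =>
    obtain ⟨ha1, ha2, hb⟩ := ih
    set A := flipSeq G σ (List.replicate s w) with hA
    have hAw : A w = flipN (σ w) s := ha1 w (CD_refl s w)
    have hplay : flipSeq G σ (List.replicate (s+1) w) = floodMove G A w (!A w) :=
      play_succ σ s w
    -- "new" vertices have the right colour in σ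
    have hNEW : ∀ u, CD G σ (s+1) w u → ¬ CD G σ s w u → σ u = flipN (σ w) (s+1) := by
      intro u h hn
      rcases h with h | ⟨p, q, hp, hadj, hq⟩
      · exact absurd h hn
      · have hqn : ¬ CD G σ s w q := fun h' => hn (CD_closure h' hq)
        have hAq : A q = σ q := ha2 q hqn
        have hAp : A p = flipN (σ w) s := ha1 p hp
        have hne : σ q ≠ flipN (σ w) s := by
          intro he
          exact hqn ((hb q).1 (mL_tail ((hb p).2 hp) hadj (by rw [hAp, hAq, he])))
        have : σ q = !(flipN (σ w) s) := bool_ne hne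
        rw [← mL_colour hq, this]; rfl
    have ha1' : ∀ u, CD G σ (s+1) w u →
        flipSeq G σ (List.replicate (s+1) w) u = flipN (σ w) (s+1) := by
      intro u h
      rw [hplay]
      by_cases hcs : CD G σ s w u
      · rw [floodMove_pos ((hb u).2 hcs), hAw]; rfl
      · rw [floodMove_neg (fun h' => hcs ((hb u).1 h')), ha2 u hcs]
        exact hNEW u h hcs
    have ha2' : ∀ u, ¬ CD G σ (s+1) w u →
        flipSeq G σ (List.replicate (s+1) w) u = σ u := by
      intro u h
      have hcs : ¬ CD G σ s w u := fun h' => h (CD_succ_of h')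
      rw [hplay, floodMove_neg (fun h' => hcs ((hb u).1 h'))]
      exact ha2 u hcs
    refine ⟨ha1', ha2', fun u => ⟨?_, ?_⟩⟩
    · -- forward: linked after s+1 plays → CD (s+1)
      intro h
      rw [hplay] at h
      induction h with
      | refl => exact CD_refl (s+1) w
      | @tail z z' hwz hzz' ih2 =>
        by_cases h' : CD G σ (s+1) w z'
        · exact h'
        · have hAz : floodMove G A w (!A w) z = flipN (σ w) (s+1) := by
            rw [← hplay]; exact ha1' z ih2
          have hAz' : floodMove G A w (!A w) z' = flipN (σ w) (s+1) := by
            rw [← hzz'.2, hAz]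
          have hσz' : σ z' = flipN (σ w) (s+1) := by
            rw [← hAz', ← hplay]; exact (ha2' z' h').symm
          by_cases hzs : CD G σ s w z
          · exact CD_step hzs hzz'.1 (mL_refl z')
          · have hσz : σ z = flipN (σ w) (s+1) := hNEW z ih2 hzs
            exact CD_closure ih2 (Relation.ReflTransGen.single ⟨hzz'.1, hσz.trans hσz'.symm⟩)
    · -- backward: CD (s+1) → linked after s+1 plays
      intro h
      rw [hplay]
      by_cases hcs : CD G σ s w u
      · exact mL_floodMove ((hb u).2 hcs)
      · rcases h with h | ⟨p, q, hp, hadj, hq⟩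
        · exact absurd h hcs
        · have hclaim : ∀ z, monoLinked G σ q z →
              floodMove G A w (!A w) z = flipN (σ w) (s+1) := by
            intro z hz
            rw [← hplay]
            exact ha1' z (CD_step hp hadj hz)
          have hwp : monoLinked G (floodMove G A w (!A w)) w p :=
            mL_floodMove ((hb p).2 hp)
          have hpq : monoAdj G (floodMove G A w (!A w)) p q := by
            refine ⟨hadj, ?_⟩
            rw [hclaim q (mL_refl q), ← hplay, ha1' p (CD_succ_of hp)]
          have hqall : ∀ z, monoLinked G σ q z →
              monoLinked G (floodMove G A w (!A w)) q z := by
            intro z hz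
            induction hz with
            | refl => exact mL_refl q
            | @tail b c hqb hbc ih3 =>
              exact ih3.tail ⟨hbc.1, by rw [hclaim b hqb, hclaim c (hqb.tail hbc)]⟩
          exact (hwp.tail hpq).trans (hqall u hq)

theorem CB (σ : V → Bool) (w : V) (t : ℕ) :
    (∀ a b, flipSeq G σ (List.replicate t w) a = flipSeq G σ (List.replicate t w) b)
      ↔ ∀ u, CD G σ t w u ∨ σ u = flipN (σ w) t := by
  obtain ⟨ha1, ha2, _⟩ := ST σ w (G := G) t
  constructor
  · intro h u
    by_cases hc : CD G σ t w u
    · exact Or.inl hc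
    · refine Or.inr ?_
      rw [← ha2 u hc, h u w, ha1 w (CD_refl t w)]
  · intro h a b
    have key : ∀ u, flipSeq G σ (List.replicate t w) u = flipN (σ w) t := by
      intro u
      by_cases hc : CD G σ t w u
      · exact ha1 u hc
      · rcases h u with h' | h'
        · exact absurd h' hc
        · rw [ha2 u hc, h']
    rw [key a, key b]

end ST

/-! ### Comparing the colouring before and after one move -/
section Move
variable {σ : V → Bool} {x : V}

/-- Vertices outside the new component of `x` keep their links. -/
lemma mL_back (hu : ¬ monoLinked G (floodMove G σ x (!σ x)) x u)
    {v : V} (h : monoLinked G (floodMove G σ x (!σ x)) u v) : monoLinked G σ u v := by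
  set σ' := floodMove G σ x (!σ x) with hσ'
  induction h with
  | refl => exact mL_refl u
  | @tail b c hub hbc ih =>
    have hb : ¬ monoLinked G σ' x b := fun h' => hu (h'.trans (mL_symm hub))
    have hc : ¬ monoLinked G σ' x c := fun h' => hb (h'.tail ⟨hbc.1.symm, hbc.2.symm⟩)
    have hbX : ¬ monoLinked G σ x b := fun h' => hb (mL_floodMove h')
    have hcX : ¬ monoLinked G σ x c := fun h' => hc (mL_floodMove h')
    refine ih.tail ⟨hbc.1, ?_⟩
    have e1 : σ' b = σ b := floodMove_neg hbX
    have e2 : σ' c = σ c := floodMove_neg hcX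
    rw [← e1, ← e2]; exact hbc.2

/-- Structure of the merged component of `x`. -/
lemma blob_struct {u : V} (hu : monoLinked G (floodMove G σ x (!σ x)) x u) :
    monoLinked G σ x u ∨ ∃ p q, monoLinked G σ x p ∧ G.Adj p q ∧ monoLinked G σ q u := by
  set σ' := floodMove G σ x (!σ x) with hσ'
  induction hu with
  | refl => exact Or.inl (mL_refl x)
  | @tail b c hxb hbc ih =>
    by_cases hcX : monoLinked G σ x c
    · exact Or.inl hcX
    · rcases ih with hbX | ⟨p, q, hp, ha, hq⟩
      · exact Or.inr ⟨b, c, hbX, hbc.1, mL_refl c⟩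
      · by_cases hbX : monoLinked G σ x b
        · exact Or.inr ⟨b, c, hbX, hbc.1, mL_refl c⟩
        · refine Or.inr ⟨p, q, hp, ha, hq.tail ⟨hbc.1, ?_⟩⟩
          have e1 : σ' b = σ b := floodMove_neg hbX
          have e2 : σ' c = σ c := floodMove_neg hcX
          rw [← e1, ← e2]; exact hbc.2

/-- Chains in `σ` survive a move. -/
lemma CD_floodMove {y : V} {d : Bool} : ∀ {s : ℕ} {u v : V},
    CD G σ s u v → CD G (floodMove G σ y d) s u v
  | 0, _, _, h => mL_floodMove h
  | _+1, _, _, Or.inl h => Or.inl (CD_floodMove h)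
  | _+1, _, _, Or.inr ⟨p, q, hp, ha, hq⟩ => Or.inr ⟨p, q, CD_floodMove hp, ha, mL_floodMove hq⟩

/-- K4: chains from `x` in the merged colouring lift at cost one. -/
lemma K4 : ∀ {s : ℕ} {u : V}, CD G (floodMove G σ x (!σ x)) s x u → CD G σ (s+1) x u := by
  intro s
  induction s with
  | zero =>
    intro u h
    rcases blob_struct h with h' | ⟨p, q, hp, ha, hq⟩
    · exact CD_succ_of (CD_zero h')
    · exact CD_step (CD_zero hp) ha hq
  | succ s ih =>
    intro u h
    rcases h with h | ⟨p, q, hp, ha, hq⟩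
    · exact CD_succ_of (ih h)
    · by_cases hqB : monoLinked G (floodMove G σ x (!σ x)) x q
      · have : monoLinked G (floodMove G σ x (!σ x)) x u := hqB.trans hq
        rcases blob_struct this with h' | ⟨p', q', hp', ha', hq'⟩
        · exact CD_mono (by omega) (CD_zero h')
        · exact CD_mono (by omega) (CD_step (CD_zero hp') ha' hq')
      · exact CD_step (ih hp) ha (mL_back hqB hq)

/-- K5: chains in the merged colouring either lift or pass through the blob. -/
lemma K5 : ∀ {s : ℕ} {u₀ v : V}, CD G (floodMove G σ x (!σ x)) s u₀ v →
    CD G σ s u₀ v ∨ ∃ a b, a + b ≤ s ∧ CD G (floodMove G σ x (!σ x)) a u₀ x ∧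
      CD G (floodMove G σ x (!σ x)) b x v := by
  intro s
  induction s with
  | zero =>
    intro u₀ v h
    by_cases h0 : monoLinked G (floodMove G σ x (!σ x)) x u₀
    · exact Or.inr ⟨0, 0, le_rfl, CD_zero (mL_symm h0), CD_zero (h0.trans h)⟩
    · exact Or.inl (mL_back h0 h)
  | succ s ih =>
    intro u₀ v h
    rcases h with h | ⟨p, q, hp, ha, hq⟩
    · rcases ih h with h' | ⟨a, b, hab, h1, h2⟩
      · exact Or.inl (CD_succ_of h')
      · exact Or.inr ⟨a, b, by omega, h1, h2⟩
    · rcases ih hp with h' | ⟨a, b, hab, h1, h2⟩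
      · by_cases hqB : monoLinked G (floodMove G σ x (!σ x)) x q
        · exact Or.inr ⟨s+1, 0, by omega,
            CD_step (CD_floodMove h') ha (mL_symm hqB), CD_zero (hqB.trans hq)⟩
        · exact Or.inl (CD_step h' ha (mL_back hqB hq))
      · exact Or.inr ⟨a, b+1, by omega, h1, CD_step h2 ha hq⟩

end Move

/-! ### The key lemma: one extra move can be absorbed into a single-vertex play -/
section KeyLemma

lemma LemL (hG : G.Connected) (σ : V → Bool) (x w : V) (t : ℕ)
    (H : ∀ u, CD G (floodMove G σ x (!σ x)) t w u ∨
      floodMove G σ x (!σ x) u = flipN (floodMove G σ x (!σ x) w) t) :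
    ∃ y, ∀ u, CD G σ (t+1) y u ∨ σ u = flipN (σ y) (t+1) := by
  set σ' := floodMove G σ x (!σ x) with hσ'def
  have hσ'x : σ' x = !σ x := floodMove_pos (mL_refl x)
  by_cases hwB : monoLinked G σ' x w
  · -- Case 1 : w lies in the merged component of x; play at x
    refine ⟨x, fun u => ?_⟩
    have hw : σ' w = !σ x := by rw [← mL_colour hwB]; exact hσ'x
    have hcol : flipN (σ x) (t+1) = flipN (σ' w) t := by
      rw [hw, flipN_not]; rfl
    rcases H u with hc | hc
    · exact Or.inl (K4 (CD_front hwB hc))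
    · by_cases huX : monoLinked G σ x u
      · exact Or.inl (CD_mono (Nat.zero_le _) (CD_zero huX))
      · refine Or.inr ?_
        have hsu : σ' u = σ u := floodMove_neg huX
        rw [← hsu, hc, hcol]
  · -- Case 2 : w is outside the merged component of x
    have hwX : ¬ monoLinked G σ x w := fun h => hwB (mL_floodMove h)
    have hσ'w : σ' w = σ w := floodMove_neg hwX
    -- a chain from w to x of length at most t+1 exists
    have hex : ∃ a, CD G σ' a w x ∧ a ≤ t+1 := by
      by_contra hno
      push_neg at hno
      have hnoCD : ∀ a, a ≤ t+1 → ¬ CD G σ' a w x := fun a ha hc => by have := hno a hc; omega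
      have hxcol : (!σ x) = flipN (σ' w) t := by
        rcases H x with h | h
        · exact absurd h (hnoCD t (by omega))
        · rw [← hσ'x]; exact h
      have hclosed : ∀ z z', monoLinked G σ' x z → G.Adj z z' → monoLinked G σ' x z' := by
        intro z z' hz hzz'
        by_contra hz'
        have hne : σ' z' ≠ σ' z := fun he => hz' (hz.tail ⟨hzz', he.symm⟩)
        have hzc : σ' z = !σ x := by rw [← mL_colour hz]; exact hσ'x
        rcases H z' with h | h
        · exact hnoCD (t+1) le_rfl (CD_step h hzz'.symm (mL_symm hz))
        · exact hne (by rw [h, ← hxcol, hzc])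
      have hall : ∀ u, monoLinked G σ' x u := by
        intro u
        obtain ⟨p⟩ := hG.preconnected x u
        have hwalk : ∀ {a b : V} (_ : G.Walk a b), monoLinked G σ' x a →
            monoLinked G σ' x b := by
          intro a b p
          induction p with
          | nil => exact id
          | cons h p ih => exact fun ha => ih (hclosed _ _ ha h)
        exact hwalk p (mL_refl x)
      exact hwB (hall w)
    obtain ⟨a₀, ha₀CD, ha₀le⟩ := hex
    have hne : {a | CD G σ' a w x}.Nonempty := ⟨a₀, ha₀CD⟩
    set ρ := sInf {a | CD G σ' a w x} with hρdef
    have hρmem : CD G σ' ρ w x := Nat.sInf_mem hne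
    have hρle : ρ ≤ t+1 := le_trans (Nat.sInf_le ha₀CD) ha₀le
    have hρpos : ρ ≠ 0 := by
      intro h0
      rw [h0] at hρmem
      exact hwB (mL_symm hρmem)
    obtain ⟨ρ₀, hρ₀⟩ := Nat.exists_eq_succ_of_ne_zero hρpos
    have hmin : ¬ CD G σ' ρ₀ w x := by
      intro hc
      have := Nat.sInf_le (show ρ₀ ∈ {a | CD G σ' a w x} from hc)
      omega
    rw [hρ₀] at hρmem
    rcases CD_frontsplit hρmem with h' | ⟨p, q, hwp, hpq, hqx⟩
    · exact absurd h' hmin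
    have hpB : ¬ monoLinked G σ' x p := fun h => hwB (h.trans (mL_symm hwp))
    have hq0 : ¬ monoLinked G σ' w q := fun h => hmin (CD_front h hqx)
    have hσ'q : σ' q = !σ' w :=
      bool_ne (fun he => hq0 (hwp.tail ⟨hpq, (mL_colour hwp).symm.trans he.symm⟩))
    have hqX : ¬ monoLinked G σ x q := by
      intro hxq
      have hpq_ne : σ p ≠ σ q :=
        fun he => hpB (mL_floodMove (hxq.tail ⟨hpq.symm, he.symm⟩))
      have hwp_σ : monoLinked G σ w p := mL_back hwB hwp
      have hw_col : σ w = !σ x := by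
        rw [mL_colour hwp_σ, bool_ne hpq_ne, ← mL_colour hxq]
      have hw_col2 : σ w = σ x := by
        have e1 : σ' q = !σ x := floodMove_pos hxq
        rw [e1, hσ'w] at hσ'q
        have := hσ'q.symm
        cases hb : σ x <;> cases hb2 : σ w <;> simp_all
      rw [hw_col2] at hw_col
      simp at hw_col
    have hq_col : σ q = !σ w := by
      have e1 : σ' q = σ q := floodMove_neg hqX
      rw [e1, hσ'w] at hσ'q
      exact hσ'q
    have hqxσ : CD G σ (ρ₀+1) q x := CD_symm (K4 (CD_symm hqx))
    have hqwσ : CD G σ 1 q w :=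
      CD_step (CD_zero (mL_refl q)) hpq.symm (mL_symm (mL_back hwB hwp))
    have hcol2 : flipN (σ q) (t+1) = flipN (σ' w) t := by
      rw [hq_col, hσ'w, flipN_not]
      simp [flipN]
    refine ⟨q, fun u => ?_⟩
    rcases H u with hc | hc
    · rcases K5 hc with h' | ⟨a, b, hab, h1, h2⟩
      · exact Or.inl (CD_mono (by omega) (CD_append hqwσ h'))
      · have hρa : ρ ≤ a := Nat.sInf_le (show a ∈ {a | CD G σ' a w x} from h1)
        have h3 : CD G σ (b+1) x u := K4 h2
        exact Or.inl (CD_mono (by omega) (CD_append hqxσ h3))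
    · by_cases huX : monoLinked G σ x u
      · exact Or.inl (CD_mono (by omega) (CD_closure hqxσ huX))
      · refine Or.inr ?_
        have hsu : σ' u = σ u := floodMove_neg huX
        rw [← hsu, hc, hcol2]

end KeyLemma

/-! ### Main induction and assembly -/
section MainAux

lemma main_ind (hG : G.Connected) : ∀ (S : List V) (σ : V → Bool),
    (∀ a b, flipSeq G σ S a = flipSeq G σ S b) →
    ∃ w t, t ≤ S.length ∧
      ∀ a b, flipSeq G σ (List.replicate t w) a = flipSeq G σ (List.replicate t w) b := by
  intro S
  induction S with
  | nil =>
    intro σ h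
    obtain ⟨w⟩ := hG.nonempty
    exact ⟨w, 0, le_rfl, h⟩
  | cons x S₀ ih =>
    intro σ h
    have h' : ∀ a b, flipSeq G (floodMove G σ x (!σ x)) S₀ a
        = flipSeq G (floodMove G σ x (!σ x)) S₀ b := h
    obtain ⟨w, t, hle, hconst⟩ := ih (floodMove G σ x (!σ x)) h'
    have hCD := (CB (floodMove G σ x (!σ x)) w t).mp hconst
    obtain ⟨y, hy⟩ := LemL hG σ x w t hCD
    refine ⟨y, t+1, ?_, (CB σ y (t+1)).mpr hy⟩
    simp only [List.length_cons]
    omega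

lemma exists_flood [Fintype V] (hG : G.Connected) (σ : V → Bool) :
    ∃ S : List V, ∀ a b, flipSeq G σ S a = flipSeq G σ S b := by
  classical
  obtain ⟨w⟩ := hG.nonempty
  have hreach : ∀ u : V, ∃ s, CD G σ s w u := by
    intro u
    obtain ⟨p⟩ := hG.preconnected w u
    have hwalk : ∀ {a b : V} (_ : G.Walk a b) {s : ℕ}, CD G σ s w a →
        ∃ s', CD G σ s' w b := by
      intro a b p
      induction p with
      | nil => exact fun h => ⟨_, h⟩
      | cons hadj p ih => exact fun h => ih (CD_step h hadj (mL_refl _))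
    exact hwalk p (CD_refl 0 w)
  choose f hf using hreach
  refine ⟨List.replicate (Finset.univ.sup f) w, (CB σ w _).mpr fun u => Or.inl ?_⟩
  exact CD_mono (Finset.le_sup (Finset.mem_univ u)) (hf u)

end MainAux
end FloodAux



open Flood
open FloodAux


/-- in the two-colour flood game on a connected, properly coloured
graph there is an optimal (minimum-length) flooding sequence all of whose moves
are played at one and the same vertex. -/
theorem two_colour_single_vertex_optimal {V : Type*} [Fintype V]
    (G : SimpleGraph V) (hG : G.Connected) (ω : V → Bool)
    (hprop : ∀ a b, G.Adj a b → ω a ≠ ω b) :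
    ∃ S : List V,
      (∀ a b, flipSeq G ω S a = flipSeq G ω S b) ∧
      S.length = sInf {k | ∃ S' : List V, S'.length = k ∧
        ∀ a b, flipSeq G ω S' a = flipSeq G ω S' b} ∧
      ∃ w, ∀ v ∈ S, v = w := by
  classical
  obtain ⟨S₀, hS₀⟩ := exists_flood hG ω
  have hPne : {k | ∃ S' : List V, S'.length = k ∧
      ∀ a b, flipSeq G ω S' a = flipSeq G ω S' b}.Nonempty :=
    ⟨S₀.length, S₀, rfl, hS₀⟩
  obtain ⟨S₁, hlen, hfl⟩ := Nat.sInf_mem hPne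
  obtain ⟨w, t, hle, hconst⟩ := main_ind hG S₁ ω hfl
  have hsle : sInf {k | ∃ S' : List V, S'.length = k ∧
      ∀ a b, flipSeq G ω S' a = flipSeq G ω S' b} ≤ t :=
    Nat.sInf_le ⟨List.replicate t w, by simp, hconst⟩
  refine ⟨List.replicate t w, hconst, ?_, w, fun v hv => List.eq_of_mem_replicate hv⟩
  simp only [List.length_replicate]
  exact le_antisymm (hlen ▸ hle) hsle
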